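/- $G_3(-4w(1-w)) = \frac{\sin(\pi w)}{\pi w (1-w)}$ for all $w \in \mathbb{C} \setminus \{0, 1\}$, where $G_3(z) = \prod_{k=1}^\infty \bigl(1 - \frac{z}{4k(k+1)}\bigr)$. -/

import Mathlib

open Real

/-- The entire function `G₃(z) = ∏_{k≥1} (1 - z/(4k(k+1)))`. -/
noncomputable def Gthree (z : ℂ) : ℂ :=
  ∏' k : ℕ, (1 - z / (4 * ((k : ℂ) + 1) * ((k : ℂ) + 2)))

open Finset Filter

lemma aux_cast1 (n : ℕ) : ((n:ℂ)+1) ≠ 0 := by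
  exact_mod_cast (Nat.cast_add_one_ne_zero n : ((n:ℂ)+1) ≠ 0)

lemma aux_cast2 (n : ℕ) : ((n:ℂ)+2) ≠ 0 := by
  have : ((n:ℂ)+2) = (((n+1:ℕ)):ℂ)+1 := by push_cast; ring
  rw [this]; exact aux_cast1 (n+1)

lemma aux_key (w : ℂ) (n : ℕ) :
    (∏ k ∈ range n, (1 - (-4*w*(1-w)) / (4*((k:ℂ)+1)*((k:ℂ)+2)))) * (((n:ℂ)+1) * (1-w))
      = (∏ j ∈ range n, (1 - w^2/((j:ℂ)+1)^2)) * ((n:ℂ)+1-w) := by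
  induction n with
  | zero => simp
  | succ n ih =>
    have h1 := aux_cast1 n
    have h2 := aux_cast2 n
    rw [prod_range_succ, prod_range_succ]
    set P := ∏ k ∈ range n, (1 - (-4*w*(1-w)) / (4*((k:ℂ)+1)*((k:ℂ)+2))) with hP
    set T := ∏ j ∈ range n, (1 - w^2/((j:ℂ)+1)^2) with hT
    push_cast
    field_simp
    ring_nf
    ring_nf at ih
    linear_combination (((n:ℂ)+2) * ((n:ℂ)+1+w) * ((n:ℂ)+2-w)) * ih

lemma aux_norm1 (n : ℕ) : ‖((n:ℂ)+1)‖ = (n:ℝ)+1 := by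
  rw [show ((n:ℂ)+1) = (((n+1:ℕ)):ℂ) by push_cast; ring]
  rw [Complex.norm_natCast]; push_cast; ring

lemma aux_norm2 (n : ℕ) : ‖((n:ℂ)+2)‖ = (n:ℝ)+2 := by
  rw [show ((n:ℂ)+2) = (((n+2:ℕ)):ℂ) by push_cast; ring]
  rw [Complex.norm_natCast]; push_cast; ring

lemma aux_summable_log (w : ℂ) (hw0 : w ≠ 0) (hw1 : w ≠ 1) :
    Summable (fun k : ℕ => Complex.log (1 - (-4*w*(1-w)) / (4*((k:ℂ)+1)*((k:ℂ)+2)))) := by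
  set C := ‖w*(1-w)‖ with hC
  have hx : ∀ n : ℕ, (1:ℂ) - (-4*w*(1-w)) / (4*((n:ℂ)+1)*((n:ℂ)+2))
      = 1 + w*(1-w)/(((n:ℂ)+1)*((n:ℂ)+2)) := by
    intro n
    have h1 := aux_cast1 n; have h2 := aux_cast2 n
    field_simp
    ring
  have hxnorm : ∀ n : ℕ, ‖w*(1-w)/(((n:ℂ)+1)*((n:ℂ)+2))‖ = C / (((n:ℝ)+1)*((n:ℝ)+2)) := by
    intro n
    rw [norm_div, show ‖(((n:ℂ)+1)*((n:ℂ)+2))‖ = ((n:ℝ)+1)*((n:ℝ)+2) from by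
      rw [norm_mul, aux_norm1, aux_norm2], hC]
  have hbase : Summable (fun k : ℕ => (3/2*C) * (1/((k:ℝ)+1)^2)) := by
    apply Summable.mul_left
    have h2 : Summable (fun n : ℕ => 1/(n:ℝ)^2) := by
      rw [Real.summable_one_div_nat_pow]; norm_num
    have := (summable_nat_add_iff 1).mpr h2
    apply this.congr
    intro k; push_cast; ring
  apply Summable.of_norm_bounded_eventually_nat hbase
  filter_upwards [eventually_ge_atTop ⌈2*C⌉₊] with n hn
  have hCpos : 0 < C := by
    rw [hC, norm_pos_iff]
    exact mul_ne_zero hw0 (sub_ne_zero.mpr (Ne.symm hw1))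
  have hn' : 2*C ≤ (n:ℝ) := le_trans (Nat.le_ceil _) (by exact_mod_cast hn)
  have hn0 : (0:ℝ) ≤ n := Nat.cast_nonneg n
  rw [hx n]
  have hsmall : ‖w*(1-w)/(((n:ℂ)+1)*((n:ℂ)+2))‖ ≤ 1/2 := by
    rw [hxnorm n]
    rw [div_le_iff₀ (by nlinarith)]
    nlinarith
  calc ‖Complex.log (1 + w*(1-w)/(((n:ℂ)+1)*((n:ℂ)+2)))‖
      ≤ 3/2 * ‖w*(1-w)/(((n:ℂ)+1)*((n:ℂ)+2))‖ :=
        Complex.norm_log_one_add_half_le_self hsmall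
    _ = 3/2 * (C / (((n:ℝ)+1)*((n:ℝ)+2))) := by rw [hxnorm n]
    _ ≤ 3/2*C * (1/((n:ℝ)+1)^2) := by
        rw [div_eq_mul_one_div C, mul_assoc]
        gcongr <;> nlinarith


lemma aux_tendsto_inv (w : ℂ) : Filter.Tendsto (fun n : ℕ => w * ((n:ℂ)+1)⁻¹) atTop (nhds 0) := by
  have h : Filter.Tendsto (fun n : ℕ => ((n:ℂ)+1)⁻¹) atTop (nhds 0) := by
    rw [tendsto_zero_iff_norm_tendsto_zero]
    have : ∀ n : ℕ, ‖((n:ℂ)+1)⁻¹‖ = 1/((n:ℝ)+1) := by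
      intro n; rw [norm_inv, aux_norm1, one_div]
    simp only [this]
    exact tendsto_one_div_add_atTop_nhds_zero_nat
  simpa using h.const_mul w

theorem Gthree_eval (w : ℂ) (hw0 : w ≠ 0) (hw1 : w ≠ 1) :
    Gthree (-4 * w * (1 - w)) = Complex.sin (π * w) / (π * w * (1 - w)) := by
  have hw1' : (1:ℂ) - w ≠ 0 := sub_ne_zero.mpr (Ne.symm hw1)
  have hπ : ((π:ℝ):ℂ) ≠ 0 := by exact_mod_cast Real.pi_ne_zero
  have hπw : ((π:ℝ):ℂ) * w ≠ 0 := mul_ne_zero hπ hw0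
  set f : ℕ → ℂ := fun k => 1 - (-4*w*(1-w)) / (4*((k:ℂ)+1)*((k:ℂ)+2)) with hf
  have hG : Gthree (-4 * w * (1 - w)) = ∏' k, f k := rfl
  by_cases hzero : ∃ k, f k = 0
  · obtain ⟨k, hk⟩ := hzero
    have h1 := aux_cast1 k; have h2 := aux_cast2 k
    have hfac : ((k:ℂ)+1+w) * ((k:ℂ)+2-w) = 0 := by
      have hk' := hk
      simp only [hf] at hk'
      field_simp at hk'
      linear_combination hk'
    have hsin : Complex.sin (π * w) = 0 := by
      rcases mul_eq_zero.mp hfac with h | h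
      · have hww : w = -((k:ℂ)+1) := by linear_combination h
        rw [show ((π:ℝ):ℂ) * w = ((-(k+1) : ℤ):ℂ) * π by push_cast [hww]; ring]
        exact Complex.sin_int_mul_pi _
      · have hww : w = ((k:ℂ)+2) := by linear_combination -h
        rw [show ((π:ℝ):ℂ) * w = (((k+2) : ℤ):ℂ) * π by push_cast [hww]; ring]
        exact Complex.sin_int_mul_pi _
    have h0 : HasProd f 0 := by
      have he : (fun s : Finset ℕ => ∏ i ∈ s, f i) =ᶠ[atTop] (fun _ => (0:ℂ)) := by
        filter_upwards [Filter.eventually_ge_atTop ({k} : Finset ℕ)] with s hs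
        exact Finset.prod_eq_zero (hs (Finset.mem_singleton_self k)) hk
      exact (tendsto_const_nhds.congr' he.symm : _)
    rw [hG, h0.tprod_eq, hsin, zero_div]
  · push_neg at hzero
    have hsum := aux_summable_log w hw0 hw1
    have hm : Multipliable f :=
      Complex.multipliable_of_summable_log hsum
    have hnat : Filter.Tendsto (fun n => ∏ k ∈ Finset.range n, f k) atTop
        (nhds (∏' k, f k)) := hm.hasProd.tendsto_prod_nat
    have hT : Filter.Tendsto (fun n => ∏ j ∈ Finset.range n, (1 - w^2/((j:ℂ)+1)^2)) atTop
        (nhds (Complex.sin (π * w) / (((π:ℝ):ℂ) * w))) := by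
      have h := (Complex.tendsto_euler_sin_prod w).const_mul ((((π:ℝ):ℂ) * w)⁻¹)
      rw [← div_eq_inv_mul] at h
      apply h.congr
      intro n
      rw [inv_mul_cancel_left₀ hπw]
    have hq : Filter.Tendsto (fun n : ℕ => (1 - w * ((n:ℂ)+1)⁻¹) * (1-w)⁻¹) atTop
        (nhds ((1:ℂ) * (1-w)⁻¹)) := by
      have := ((aux_tendsto_inv w).const_sub 1).mul_const ((1-w)⁻¹)
      simpa using this
    have hfull : Filter.Tendsto (fun n => ∏ k ∈ Finset.range n, f k) atTop
        (nhds (Complex.sin (π * w) / (π * w * (1 - w)))) := by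
      have hcongr : ∀ n : ℕ, ∏ k ∈ Finset.range n, f k
          = (∏ j ∈ Finset.range n, (1 - w^2/((j:ℂ)+1)^2)) * ((1 - w * ((n:ℂ)+1)⁻¹) * (1-w)⁻¹) := by
        intro n
        have hkey := aux_key w n
        have h1 := aux_cast1 n
        have : ∏ k ∈ Finset.range n, f k
            = (∏ j ∈ Finset.range n, (1 - w^2/((j:ℂ)+1)^2)) * ((n:ℂ)+1-w) / (((n:ℂ)+1) * (1-w)) := by
          rw [eq_div_iff (mul_ne_zero h1 hw1'), ← hkey]
        rw [this]
        field_simp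
      have hlim := hT.mul hq
      rw [show Complex.sin (π * w) / (((π:ℝ):ℂ) * w) * (1 * (1-w)⁻¹)
          = Complex.sin (π * w) / (π * w * (1 - w)) from by field_simp] at hlim
      exact (hlim.congr (fun n => (hcongr n).symm))
    rw [hG, tendsto_nhds_unique hnat hfull]
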